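/- arXiv:1601.05637 — 2 statements merged into one kernel-verified Lean document; each statement's English description precedes it below -/
import Mathlib

section
/- Let R = [r_{n,k}] be a quasi-consistent Riordan array (z_n = a_{n+1} for all n) whose A-sequence (a_n) is a nonnegative log-concave sequence. Then the 0th column (r_{n,0})_{n≥0} of R is log-convex. -/
private lemma aux_spread (a : ℕ → ℝ)
    (hlc : ∀ i j : ℕ, i < j → a i * a (j + 1) ≤ a (i + 1) * a j) :
    ∀ (d r p q s : ℕ), p = r + d → p ≤ q → q ≤ s → r + s = p + q →
      a r * a s ≤ a p * a q := by
  intro d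
  induction d with
  | zero =>
    intro r p q s hp hpq hqs hsum
    have hr : p = r := by omega
    have hs : s = q := by omega
    subst hr; subst hs; exact le_rfl
  | succ d ih =>
    intro r p q s hp hpq hqs hsum
    have h1 : a r * a s ≤ a (r + 1) * a (s - 1) := by
      have := hlc r (s - 1) (by omega)
      have hss : s - 1 + 1 = s := by omega
      rwa [hss] at this
    have h2 : a (r + 1) * a (s - 1) ≤ a p * a q :=
      ih (r + 1) p q (s - 1) (by omega) hpq (by omega) (by omega)
    exact h1.trans h2

private def auxP (a : ℕ → ℝ) (i k : ℕ) : ℝ :=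
  if 1 ≤ k ∧ k ≤ i + 1 then a (i + 1 - k) else 0

private lemma auxP_nonneg (a : ℕ → ℝ) (ha : ∀ n, 0 ≤ a n) (i k : ℕ) : 0 ≤ auxP a i k := by
  unfold auxP
  split
  · exact ha _
  · exact le_rfl

private lemma auxP_tp2 (a : ℕ → ℝ) (ha : ∀ n, 0 ≤ a n)
    (hlc : ∀ i j : ℕ, i < j → a i * a (j + 1) ≤ a (i + 1) * a j)
    (i j k l : ℕ) (hij : i < j) (hkl : k < l) :
    auxP a i l * auxP a j k ≤ auxP a i k * auxP a j l := by
  by_cases hk1 : 1 ≤ k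
  · by_cases hli : l ≤ i + 1
    · have hPik : auxP a i k = a (i + 1 - k) := if_pos ⟨hk1, by omega⟩
      have hPjl : auxP a j l = a (j + 1 - l) := if_pos ⟨by omega, by omega⟩
      have hPil : auxP a i l = a (i + 1 - l) := if_pos ⟨by omega, hli⟩
      have hPjk : auxP a j k = a (j + 1 - k) := if_pos ⟨hk1, by omega⟩
      rw [hPik, hPjl, hPil, hPjk]
      by_cases hc : i + 1 - k ≤ j + 1 - l
      · exact aux_spread a hlc ((i + 1 - k) - (i + 1 - l)) (i + 1 - l) (i + 1 - k)
          (j + 1 - l) (j + 1 - k) (by omega) hc (by omega) (by omega)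
      · have h := aux_spread a hlc ((j + 1 - l) - (i + 1 - l)) (i + 1 - l) (j + 1 - l)
          (i + 1 - k) (j + 1 - k) (by omega) (by omega) (by omega) (by omega)
        linarith [h]
    · have hPil : auxP a i l = 0 := if_neg (by omega)
      rw [hPil, zero_mul]
      exact mul_nonneg (auxP_nonneg a ha _ _) (auxP_nonneg a ha _ _)
  · have hk0 : k = 0 := by omega
    subst hk0
    have h0i : auxP a i 0 = 0 := if_neg (by omega)
    have h0j : auxP a j 0 = 0 := if_neg (by omega)
    simp [h0i, h0j]

private def auxD (R : ℕ → ℕ → ℝ) (n k : ℕ) : ℝ :=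
  match k with
  | 0 => 0
  | Nat.succ m => R n m

private lemma auxD_zero (R : ℕ → ℕ → ℝ) (n : ℕ) : auxD R n 0 = 0 := rfl

private lemma auxD_succ (R : ℕ → ℕ → ℝ) (n m : ℕ) : auxD R n (m + 1) = R n m := rfl

private lemma auxR_nonneg (a z : ℕ → ℝ) (ha : ∀ n, 0 ≤ a n) (hz : ∀ n, 0 ≤ z n)
    (R : ℕ → ℕ → ℝ) (hR00 : R 0 0 = 1) (htri : ∀ n k, n < k → R n k = 0)
    (hZ : ∀ n, R (n + 1) 0 = ∑ j ∈ Finset.range (n + 1), z j * R n j)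
    (hA : ∀ n k, R (n + 1) (k + 1) = ∑ j ∈ Finset.range (n + 1), a j * R n (k + j)) :
    ∀ n k, 0 ≤ R n k := by
  intro n
  induction n with
  | zero =>
    intro k
    rcases k with _ | m
    · rw [hR00]; norm_num
    · rw [htri 0 (m + 1) (by omega)]
  | succ n ih =>
    intro k
    rcases k with _ | m
    · rw [hZ n]
      exact Finset.sum_nonneg fun j _ => mul_nonneg (hz j) (ih j)
    · rw [hA n m]
      exact Finset.sum_nonneg fun j _ => mul_nonneg (ha j) (ih (m + j))

private lemma auxD_nonneg (a z : ℕ → ℝ) (ha : ∀ n, 0 ≤ a n) (hz : ∀ n, 0 ≤ z n)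
    (R : ℕ → ℕ → ℝ) (hR00 : R 0 0 = 1) (htri : ∀ n k, n < k → R n k = 0)
    (hZ : ∀ n, R (n + 1) 0 = ∑ j ∈ Finset.range (n + 1), z j * R n j)
    (hA : ∀ n k, R (n + 1) (k + 1) = ∑ j ∈ Finset.range (n + 1), a j * R n (k + j)) :
    ∀ n k, 0 ≤ auxD R n k := by
  intro n k
  rcases k with _ | m
  · exact le_rfl
  · rw [auxD_succ]
    exact auxR_nonneg a z ha hz R hR00 htri hZ hA n m

private lemma auxD_vanish (R : ℕ → ℕ → ℝ) (htri : ∀ n k, n < k → R n k = 0) :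
    ∀ n i, n + 2 ≤ i → auxD R n i = 0 := by
  intro n i h
  rcases i with _ | m
  · omega
  · rw [auxD_succ]
    exact htri n m (by omega)

private lemma aux_shift (f : ℕ → ℝ) (t : ℕ) :
    ∀ M, ∑ i ∈ Finset.range (M + t), (if t ≤ i then f (i - t) else 0)
      = ∑ j ∈ Finset.range M, f j := by
  intro M
  induction M with
  | zero =>
    simp only [Nat.zero_add, Finset.range_zero, Finset.sum_empty]
    exact Finset.sum_eq_zero fun i hi => if_neg (by have := Finset.mem_range.mp hi; omega)
  | succ M ih =>
    have h1 : M + 1 + t = (M + t) + 1 := by omega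
    rw [h1, Finset.sum_range_succ, ih, Finset.sum_range_succ, if_pos (by omega),
      Nat.add_sub_cancel]

private lemma auxD_rec (a z : ℕ → ℝ) (hcons : ∀ n, z n = a (n + 1))
    (R : ℕ → ℕ → ℝ) (htri : ∀ n k, n < k → R n k = 0)
    (hZ : ∀ n, R (n + 1) 0 = ∑ j ∈ Finset.range (n + 1), z j * R n j)
    (hA : ∀ n k, R (n + 1) (k + 1) = ∑ j ∈ Finset.range (n + 1), a j * R n (k + j)) :
    ∀ n c M, n + 2 ≤ M →
      auxD R (n + 1) c = ∑ i ∈ Finset.range M, auxD R n i * auxP a i c := by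
  have hred : ∀ n c M, n + 2 ≤ M → ∑ i ∈ Finset.range M, auxD R n i * auxP a i c
      = ∑ i ∈ Finset.range (n + 2), auxD R n i * auxP a i c := by
    intro n c M h
    symm
    apply Finset.sum_subset (Finset.range_subset_range.mpr h)
    intro i _ hi
    have h2 : n + 2 ≤ i := by
      by_contra hc
      exact hi (Finset.mem_range.mpr (by omega))
    rw [auxD_vanish R htri n i h2, zero_mul]
  intro n c M hM
  rw [hred n c M hM]
  rcases c with _ | m
  · rw [auxD_zero]
    symm
    apply Finset.sum_eq_zero
    intro i _
    have : auxP a i 0 = 0 := if_neg (by omega)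
    rw [this, mul_zero]
  rcases m with _ | m
  · -- c = 1
    have hterm : ∀ i, auxD R n i * auxP a i 1 = auxD R n i * a i := by
      intro i
      have : auxP a i 1 = a i := by
        have h1 : auxP a i 1 = a (i + 1 - 1) := if_pos ⟨le_rfl, by omega⟩
        rw [h1, Nat.add_sub_cancel]
      rw [this]
    rw [Finset.sum_congr rfl fun i _ => hterm i]
    rw [Finset.sum_range_succ']
    rw [auxD_zero, zero_mul, add_zero]
    rw [auxD_succ, hZ n]
    apply Finset.sum_congr rfl
    intro j _
    rw [auxD_succ, hcons j, mul_comm]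
  · -- c = m + 2
    -- switch to range ((n+2) + (m+1)) then shift
    rw [← hred n (m + 2) ((n + 2) + (m + 1)) (by omega)]
    have hterm : ∀ i, auxD R n i * auxP a i (m + 2)
        = (if m + 1 ≤ i then (fun j => auxD R n ((m + 1) + j) * a j) (i - (m + 1)) else 0) := by
      intro i
      by_cases h : m + 1 ≤ i
      · rw [if_pos h]
        have hP : auxP a i (m + 2) = a (i + 1 - (m + 2)) := if_pos ⟨by omega, by omega⟩
        have e1 : (m + 1) + (i - (m + 1)) = i := by omega
        have e2 : i + 1 - (m + 2) = i - (m + 1) := by omega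
        simp only [hP, e1, e2]
      · rw [if_neg h]
        have hP : auxP a i (m + 2) = 0 := if_neg (by omega)
        rw [hP, mul_zero]
    rw [Finset.sum_congr rfl fun i _ => hterm i]
    rw [aux_shift (fun j => auxD R n ((m + 1) + j) * a j) (m + 1) (n + 2)]
    have hterm2 : ∀ j, auxD R n ((m + 1) + j) * a j = R n (m + j) * a j := by
      intro j
      have e : (m + 1) + j = (m + j) + 1 := by omega
      rw [e, auxD_succ]
    rw [Finset.sum_congr rfl fun j _ => hterm2 j]
    rw [Finset.sum_range_succ]
    have hvan : R n (m + (n + 1)) = 0 := htri n _ (by omega)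
    rw [hvan, zero_mul, add_zero]
    rw [auxD_succ, hA n m]
    apply Finset.sum_congr rfl
    intro j _
    rw [mul_comm]

private lemma aux_sq (F : ℕ → ℕ → ℝ) (hdiag : ∀ i, F i i = 0)
    (hpair : ∀ i j, i < j → 0 ≤ F i j + F j i) (M : ℕ) :
    0 ≤ ∑ i ∈ Finset.range M, ∑ j ∈ Finset.range M, F i j := by
  induction M with
  | zero => simp
  | succ M ih =>
    rw [Finset.sum_range_succ]
    simp only [Finset.sum_range_succ]
    rw [Finset.sum_add_distrib, hdiag]
    have h2 : 0 ≤ ∑ i ∈ Finset.range M, (F i M + F M i) :=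
      Finset.sum_nonneg fun i hi => hpair i M (Finset.mem_range.mp hi)
    rw [Finset.sum_add_distrib] at h2
    linarith

private lemma aux_tp2 (a z : ℕ → ℝ) (ha : ∀ n, 0 ≤ a n) (hz : ∀ n, 0 ≤ z n)
    (hcons : ∀ n, z n = a (n + 1))
    (hlc : ∀ i j : ℕ, i < j → a i * a (j + 1) ≤ a (i + 1) * a j)
    (R : ℕ → ℕ → ℝ) (hR00 : R 0 0 = 1) (htri : ∀ n k, n < k → R n k = 0)
    (hZ : ∀ n, R (n + 1) 0 = ∑ j ∈ Finset.range (n + 1), z j * R n j)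
    (hA : ∀ n k, R (n + 1) (k + 1) = ∑ j ∈ Finset.range (n + 1), a j * R n (k + j)) :
    ∀ n k l, k < l → auxD R (n + 1) k * auxD R n l ≤ auxD R n k * auxD R (n + 1) l := by
  have hDn : ∀ n k, 0 ≤ auxD R n k := auxD_nonneg a z ha hz R hR00 htri hZ hA
  intro n
  induction n with
  | zero =>
    intro k l hkl
    rcases l with _ | _ | l2
    · omega
    · have hk : k = 0 := by omega
      subst hk
      rw [auxD_zero, auxD_zero, zero_mul, zero_mul]
    · have h0 : auxD R 0 (l2 + 2) = 0 := by
        rw [auxD_succ]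
        exact htri 0 (l2 + 1) (by omega)
      rw [h0, mul_zero]
      exact mul_nonneg (hDn _ _) (hDn _ _)
  | succ n ih =>
    intro k l hkl
    have e1 : auxD R (n + 1 + 1) k = ∑ i ∈ Finset.range (n + 3), auxD R (n + 1) i * auxP a i k :=
      auxD_rec a z hcons R htri hZ hA (n + 1) k (n + 3) (by omega)
    have e2 : auxD R (n + 1 + 1) l = ∑ i ∈ Finset.range (n + 3), auxD R (n + 1) i * auxP a i l :=
      auxD_rec a z hcons R htri hZ hA (n + 1) l (n + 3) (by omega)
    have e3 : auxD R (n + 1) k = ∑ i ∈ Finset.range (n + 3), auxD R n i * auxP a i k :=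
      auxD_rec a z hcons R htri hZ hA n k (n + 3) (by omega)
    have e4 : auxD R (n + 1) l = ∑ i ∈ Finset.range (n + 3), auxD R n i * auxP a i l :=
      auxD_rec a z hcons R htri hZ hA n l (n + 3) (by omega)
    have hsq : 0 ≤ ∑ i ∈ Finset.range (n + 3), ∑ j ∈ Finset.range (n + 3),
        ((auxD R n i * auxD R (n + 1) j - auxD R (n + 1) i * auxD R n j)
          * (auxP a i k * auxP a j l)) := by
      apply aux_sq
      · intro i; ring
      · intro i j hij
        have hIH := ih i j hij
        have hP := auxP_tp2 a ha hlc i j k l hij hkl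
        nlinarith [mul_nonneg (sub_nonneg.mpr hIH) (sub_nonneg.mpr hP)]
    have expand : ∑ i ∈ Finset.range (n + 3), ∑ j ∈ Finset.range (n + 3),
        ((auxD R n i * auxD R (n + 1) j - auxD R (n + 1) i * auxD R n j)
          * (auxP a i k * auxP a j l))
        = auxD R (n + 1) k * auxD R (n + 1 + 1) l - auxD R (n + 1 + 1) k * auxD R (n + 1) l := by
      rw [e1, e2, e3, e4, Finset.sum_mul_sum, Finset.sum_mul_sum, ← Finset.sum_sub_distrib]
      apply Finset.sum_congr rfl
      intro i _
      rw [← Finset.sum_sub_distrib]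
      apply Finset.sum_congr rfl
      intro j _
      ring
    rw [expand] at hsq
    linarith

private lemma aux_three (a z : ℕ → ℝ) (ha : ∀ n, 0 ≤ a n) (hz : ∀ n, 0 ≤ z n)
    (hcons : ∀ n, z n = a (n + 1))
    (hlc : ∀ i j : ℕ, i < j → a i * a (j + 1) ≤ a (i + 1) * a j)
    (R : ℕ → ℕ → ℝ) (hR00 : R 0 0 = 1) (htri : ∀ n k, n < k → R n k = 0)
    (hZ : ∀ n, R (n + 1) 0 = ∑ j ∈ Finset.range (n + 1), z j * R n j)
    (hA : ∀ n k, R (n + 1) (k + 1) = ∑ j ∈ Finset.range (n + 1), a j * R n (k + j)) :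
    ∀ n, R (n + 1) 0 * R (n + 1) 0 ≤ R n 0 * R (n + 2) 0 := by
  intro n
  have e2 : auxD R (n + 1 + 1) 1 = ∑ i ∈ Finset.range (n + 3), auxD R (n + 1) i * auxP a i 1 :=
    auxD_rec a z hcons R htri hZ hA (n + 1) 1 (n + 3) (by omega)
  have e1 : auxD R (n + 1) 1 = ∑ i ∈ Finset.range (n + 3), auxD R n i * auxP a i 1 :=
    auxD_rec a z hcons R htri hZ hA n 1 (n + 3) (by omega)
  have key : 0 ≤ ∑ i ∈ Finset.range (n + 3),
      (auxD R n 1 * (auxD R (n + 1) i * auxP a i 1)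
        - auxD R (n + 1) 1 * (auxD R n i * auxP a i 1)) := by
    apply Finset.sum_nonneg
    intro i _
    rcases i with _ | _ | i2
    · simp [auxD_zero]
    · have : auxD R n 1 * (auxD R (n + 1) 1 * auxP a 1 1)
          - auxD R (n + 1) 1 * (auxD R n 1 * auxP a 1 1) = 0 := by ring
      linarith
    · have hmin := aux_tp2 a z ha hz hcons hlc R hR00 htri hZ hA n 1 (i2 + 2) (by omega)
      have hP := auxP_nonneg a ha (i2 + 2) 1
      nlinarith [mul_nonneg hP (sub_nonneg.mpr hmin)]
  have expand : ∑ i ∈ Finset.range (n + 3),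
      (auxD R n 1 * (auxD R (n + 1) i * auxP a i 1)
        - auxD R (n + 1) 1 * (auxD R n i * auxP a i 1))
      = auxD R n 1 * auxD R (n + 1 + 1) 1 - auxD R (n + 1) 1 * auxD R (n + 1) 1 := by
    rw [Finset.sum_sub_distrib, ← Finset.mul_sum, ← Finset.mul_sum, ← e2, ← e1]
  rw [expand] at key
  have d1 : auxD R n 1 = R n 0 := rfl
  have d2 : auxD R (n + 1) 1 = R (n + 1) 0 := rfl
  have d3 : auxD R (n + 1 + 1) 1 = R (n + 2) 0 := rfl
  rw [d1, d2, d3] at key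
  linarith

theorem quasiConsistent_riordan_col0_logConvex (a z : ℕ → ℝ) (ha : ∀ n, 0 ≤ a n) (hz : ∀ n, 0 ≤ z n)
    (hcons : ∀ n, z n = a (n + 1))
    (hlogconcave : ∀ i j : ℕ, i < j → a i * a (j + 1) ≤ a (i + 1) * a j)
    (R : ℕ → ℕ → ℝ)
    (hR00 : R 0 0 = 1)
    (htri : ∀ n k, n < k → R n k = 0)
    (hZ : ∀ n, R (n + 1) 0 = ∑ j ∈ Finset.range (n + 1), z j * R n j)
    (hA : ∀ n k, R (n + 1) (k + 1) = ∑ j ∈ Finset.range (n + 1), a j * R n (k + j)) :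
    ∀ i j : ℕ, i < j → R (i + 1) 0 * R j 0 ≤ R i 0 * R (j + 1) 0 := by
  have hRn : ∀ n k, 0 ≤ R n k := auxR_nonneg a z ha hz R hR00 htri hZ hA
  have h3 : ∀ n, R (n + 1) 0 * R (n + 1) 0 ≤ R n 0 * R (n + 2) 0 :=
    aux_three a z ha hz hcons hlogconcave R hR00 htri hZ hA
  by_cases hall : ∀ n, 0 < R n 0
  · have key : ∀ i j, i ≤ j → R (i + 1) 0 * R j 0 ≤ R i 0 * R (j + 1) 0 := by
      intro i j hij
      induction j, hij using Nat.le_induction with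
      | base => rw [mul_comm]
      | succ j hij ihj =>
        have hj1 : 0 < R (j + 1) 0 := hall _
        have h3j := h3 j
        have hstep : R (i + 1) 0 * R (j + 1) 0 * R (j + 1) 0
            ≤ R i 0 * R (j + 1 + 1) 0 * R (j + 1) 0 := by
          have m1 : R (i + 1) 0 * R j 0 * R (j + 2) 0 ≤ R i 0 * R (j + 1) 0 * R (j + 2) 0 :=
            mul_le_mul_of_nonneg_right ihj (hRn _ _)
          have m2 : R (i + 1) 0 * (R (j + 1) 0 * R (j + 1) 0)
              ≤ R (i + 1) 0 * (R j 0 * R (j + 2) 0) :=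
            mul_le_mul_of_nonneg_left h3j (hRn _ _)
          have e : R (j + 1 + 1) 0 = R (j + 2) 0 := rfl
          rw [e]
          nlinarith [m1, m2]
        exact le_of_mul_le_mul_right hstep hj1
    intro i j hij
    exact key i j (le_of_lt hij)
  · push_neg at hall
    obtain ⟨m, hm⟩ := hall
    have hm0 : R m 0 = 0 := le_antisymm hm (hRn m 0)
    rcases m with _ | t
    · rw [hR00] at hm0; norm_num at hm0
    · have back : ∀ u, R (u + 1) 0 = 0 → R 1 0 = 0 := by
        intro u
        induction u with
        | zero => exact id
        | succ u ihu =>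
          intro h
          apply ihu
          have h3u := h3 u
          have e : R (u + 1 + 1) 0 = R (u + 2) 0 := rfl
          rw [← e, h, mul_zero] at h3u
          exact mul_self_eq_zero.mp (le_antisymm h3u (mul_self_nonneg _))
      have h10 : R 1 0 = 0 := back t hm0
      have fwd : ∀ u, R (u + 1) 0 = 0 := by
        intro u
        induction u with
        | zero => exact h10
        | succ u ihu =>
          have h3u := h3 (u + 1)
          rw [ihu, zero_mul] at h3u
          exact mul_self_eq_zero.mp (le_antisymm h3u (mul_self_nonneg _))
      intro i j hij
      rcases j with _ | jj
      · omega
      · rw [fwd jj, fwd (jj + 1), mul_zero, mul_zero]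
end

section
/- Let R = [r_{n,k}] be a quasi-consistent Riordan array (z_n = a_{n+1} for all n) whose A-sequence (a_n) is a nonnegative log-concave sequence. Then for every n, the nth row r_{n,0}, r_{n,1}, …, r_{n,n} of R is log-concave, i.e., r_{n,k}² ≥ r_{n,k-1} r_{n,k+1} for 1 ≤ k ≤ n−1, and moreover all entries r_{n,k} are nonnegative. -/
open Finset

private noncomputable def Aext (a : ℕ → ℝ) : ℤ → ℝ := fun t => if 0 ≤ t then a t.toNat else 0

private lemma Aext_nonneg (a : ℕ → ℝ) (ha : ∀ n, 0 ≤ a n) (t : ℤ) : 0 ≤ Aext a t := by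
  unfold Aext; split <;> simp [ha]

private lemma Aext_step (a : ℕ → ℝ) (ha : ∀ n, 0 ≤ a n)
    (hlog : ∀ i j : ℕ, i < j → a i * a (j + 1) ≤ a (i + 1) * a j)
    (p q : ℤ) (hpq : p < q) :
    Aext a p * Aext a (q + 1) ≤ Aext a (p + 1) * Aext a q := by
  rcases lt_or_ge p 0 with hp | hp
  · have h0 : Aext a p = 0 := by unfold Aext; rw [if_neg (by omega)]
    rw [h0, zero_mul]
    exact mul_nonneg (Aext_nonneg a ha _) (Aext_nonneg a ha _)
  · have hq : 0 ≤ q := by omega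
    have e1 : Aext a p = a p.toNat := by unfold Aext; rw [if_pos hp]
    have e2 : Aext a (q + 1) = a (q.toNat + 1) := by
      unfold Aext; rw [if_pos (by omega)]; congr 1; omega
    have e3 : Aext a (p + 1) = a (p.toNat + 1) := by
      unfold Aext; rw [if_pos (by omega)]; congr 1; omega
    have e4 : Aext a q = a q.toNat := by unfold Aext; rw [if_pos hq]
    rw [e1, e2, e3, e4]
    exact hlog _ _ (by omega)

private lemma Aext_gen (a : ℕ → ℝ) (ha : ∀ n, 0 ≤ a n)
    (hlog : ∀ i j : ℕ, i < j → a i * a (j + 1) ≤ a (i + 1) * a j) :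
    ∀ (d : ℕ) (p q : ℤ), p ≤ q → Aext a p * Aext a (q + d) ≤ Aext a (p + d) * Aext a q := by
  intro d
  induction d with
  | zero => intro p q _; simp [mul_comm]
  | succ d ih =>
    intro p q hpq
    rcases eq_or_lt_of_le hpq with rfl | hlt
    · have e : p + ((d : ℤ) + 1) = p + (↑d + 1) := rfl
      push_cast
      ring_nf
      exact le_refl _
    · have h1 : Aext a p * Aext a (q + (d + 1 : ℕ)) ≤ Aext a (p + 1) * Aext a (q + d) := by
        have := Aext_step a ha hlog p (q + d) (by omega)
        calc Aext a p * Aext a (q + (d + 1 : ℕ)) = Aext a p * Aext a (q + d + 1) := by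
              push_cast; ring_nf
          _ ≤ Aext a (p + 1) * Aext a (q + d) := this
      have h2 : Aext a (p + 1) * Aext a (q + d) ≤ Aext a (p + 1 + d) * Aext a q :=
        ih (p + 1) q (by omega)
      calc Aext a p * Aext a (q + (d + 1 : ℕ)) ≤ Aext a (p + 1) * Aext a (q + d) := h1
        _ ≤ Aext a (p + 1 + d) * Aext a q := h2
        _ = Aext a (p + (d + 1 : ℕ)) * Aext a q := by push_cast; ring_nf

private lemma conv_tp2 (A : ℤ → ℝ) (hA0 : ∀ t, 0 ≤ A t)
    (hAgen : ∀ (d : ℕ) (p q : ℤ), p ≤ q → A p * A (q + d) ≤ A (p + d) * A q)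
    (b : ℤ → ℝ) (hb0 : ∀ t, 0 ≤ b t) (N : ℤ)
    (hbsupp : ∀ t : ℤ, t < 0 ∨ N < t → b t = 0)
    (hbtp2 : ∀ t t' : ℤ, t ≤ t' → b t * b (t' + 1) ≤ b (t + 1) * b t')
    (i j : ℤ) (hij : i < j) :
    (∑ m ∈ Finset.Icc (-1 : ℤ) (N + 1), b m * A (m + 1 - i)) *
        (∑ m ∈ Finset.Icc (-1 : ℤ) (N + 1), b m * A (m + 1 - (j + 1))) ≤
      (∑ m ∈ Finset.Icc (-1 : ℤ) (N + 1), b m * A (m + 1 - (i + 1))) *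
        (∑ m ∈ Finset.Icc (-1 : ℤ) (N + 1), b m * A (m + 1 - j)) := by
  set T : Finset ℤ := Finset.Icc (-1) (N + 1) with hT
  -- shift lemma
  have shift : ∀ w : ℤ → ℝ, ∑ m ∈ T, b (m + 1) * w (m + 1) = ∑ m ∈ T, b m * w m := by
    intro w
    have h1 : ∑ m ∈ Finset.Icc (0 : ℤ) (N + 2), b m * w m
        = ∑ m ∈ T, b (m + 1) * w (m + 1) := by
      rw [hT, show Finset.Icc (0 : ℤ) (N + 2)
            = Finset.map (addRightEmbedding 1) (Finset.Icc (-1) (N + 1)) by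
          rw [Finset.map_add_right_Icc]; congr 1 <;> ring,
        Finset.sum_map]
      rfl
    have h2 : ∑ m ∈ Finset.Icc (0 : ℤ) (N + 2), b m * w m
        = ∑ m ∈ Finset.Icc (-1 : ℤ) (N + 2), b m * w m := by
      apply Finset.sum_subset (Finset.Icc_subset_Icc (by omega) le_rfl)
      intro x hx hx'
      simp only [Finset.mem_Icc] at hx hx'
      rw [hbsupp x (by omega), zero_mul]
    have h3 : ∑ m ∈ T, b m * w m = ∑ m ∈ Finset.Icc (-1 : ℤ) (N + 2), b m * w m := by
      rw [hT]
      apply Finset.sum_subset (Finset.Icc_subset_Icc le_rfl (by omega))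
      intro x hx hx'
      simp only [Finset.mem_Icc] at hx hx'
      rw [hbsupp x (by omega), zero_mul]
    rw [← h1, h3]
    exact h2
  -- rewrite the two "+1" sums using shift
  have ci1 : ∑ m ∈ T, b m * A (m + 1 - (i + 1)) = ∑ m ∈ T, b (m + 1) * A (m + 1 - i) := by
    rw [shift (fun m => A (m - i))]
    apply Finset.sum_congr rfl
    intro m _
    congr 1
    ring_nf
  have cj1 : ∑ m ∈ T, b m * A (m + 1 - (j + 1)) = ∑ m ∈ T, b (m + 1) * A (m + 1 - j) := by
    rw [shift (fun m => A (m - j))]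
    apply Finset.sum_congr rfl
    intro m _
    congr 1
    ring_nf
  rw [ci1, cj1, ← sub_nonneg]
  have expand :
      (∑ m ∈ T, b (m + 1) * A (m + 1 - i)) * (∑ m ∈ T, b m * A (m + 1 - j)) -
        (∑ m ∈ T, b m * A (m + 1 - i)) * (∑ m ∈ T, b (m + 1) * A (m + 1 - j))
      = ∑ t ∈ T, ∑ t' ∈ T,
          A (t + 1 - i) * A (t' + 1 - j) * (b (t + 1) * b t' - b t * b (t' + 1)) := by
    rw [Finset.sum_mul_sum, Finset.sum_mul_sum, ← Finset.sum_sub_distrib]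
    apply Finset.sum_congr rfl
    intro t _
    rw [← Finset.sum_sub_distrib]
    apply Finset.sum_congr rfl
    intro t' _
    ring
  rw [expand]
  -- pairing argument
  set f : ℤ → ℤ → ℝ := fun t t' =>
    A (t + 1 - i) * A (t' + 1 - j) * (b (t + 1) * b t' - b t * b (t' + 1)) with hf
  have pairpos : ∀ t t' : ℤ, 0 ≤ f t t' + f t' t := by
    have H : ∀ t t' : ℤ, t ≤ t' → 0 ≤ f t t' + f t' t := by
      intro t t' htt
      have hb : 0 ≤ b (t + 1) * b t' - b t * b (t' + 1) := sub_nonneg.2 (hbtp2 t t' htt)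
      have hAmin : A (t' + 1 - i) * A (t + 1 - j) ≤ A (t + 1 - i) * A (t' + 1 - j) := by
        have hd : ((t' - t).toNat : ℤ) = t' - t := Int.toNat_of_nonneg (by omega)
        have := hAgen (t' - t).toNat (t + 1 - j) (t + 1 - i) (by omega)
        rw [hd] at this
        have e1 : t + 1 - i + (t' - t) = t' + 1 - i := by ring
        have e2 : t + 1 - j + (t' - t) = t' + 1 - j := by ring
        rw [e1, e2] at this
        calc A (t' + 1 - i) * A (t + 1 - j) = A (t + 1 - j) * A (t' + 1 - i) := by ring
          _ ≤ A (t' + 1 - j) * A (t + 1 - i) := this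
          _ = A (t + 1 - i) * A (t' + 1 - j) := by ring
      have he : f t t' + f t' t =
          (A (t + 1 - i) * A (t' + 1 - j) - A (t' + 1 - i) * A (t + 1 - j)) *
            (b (t + 1) * b t' - b t * b (t' + 1)) := by
        rw [hf]; ring
      rw [he]
      exact mul_nonneg (sub_nonneg.2 hAmin) hb
    intro t t'
    rcases le_total t t' with h | h
    · exact H t t' h
    · have := H t' t h
      linarith
  have hdouble : 0 ≤ (∑ t ∈ T, ∑ t' ∈ T, f t t') + ∑ t ∈ T, ∑ t' ∈ T, f t t' := by
    have hsw : ∑ t ∈ T, ∑ t' ∈ T, f t t' = ∑ t ∈ T, ∑ t' ∈ T, f t' t := Finset.sum_comm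
    rw (occs := .pos [2]) [hsw]
    rw [← Finset.sum_add_distrib]
    apply Finset.sum_nonneg
    intro t _
    rw [← Finset.sum_add_distrib]
    exact Finset.sum_nonneg fun t' _ => pairpos t t'
  linarith

private lemma sum_Icc_int_eq (g : ℤ → ℝ) (n : ℕ) :
    ∑ m ∈ Finset.Icc (0 : ℤ) (n : ℤ), g m = ∑ m ∈ Finset.range (n + 1), g m := by
  induction n with
  | zero => simp
  | succ n ih =>
    have hins : Finset.Icc (0 : ℤ) ((n : ℤ) + 1)
        = insert ((n : ℤ) + 1) (Finset.Icc (0 : ℤ) (n : ℤ)) := by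
      ext x
      simp only [Finset.mem_Icc, Finset.mem_insert]
      omega
    rw [Finset.sum_range_succ, ← ih, show ((n + 1 : ℕ) : ℤ) = (n : ℤ) + 1 by push_cast; ring,
      hins, Finset.sum_insert (by simp)]
    ring

theorem quasiConsistent_riordan_rows_logConcave (a z : ℕ → ℝ) (ha : ∀ n, 0 ≤ a n) (hz : ∀ n, 0 ≤ z n)
    (hcons : ∀ n, z n = a (n + 1))
    (hlogconcave : ∀ i j : ℕ, i < j → a i * a (j + 1) ≤ a (i + 1) * a j)
    (R : ℕ → ℕ → ℝ)
    (hR00 : R 0 0 = 1)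
    (htri : ∀ n k, n < k → R n k = 0)
    (hZ : ∀ n, R (n + 1) 0 = ∑ j ∈ Finset.range (n + 1), z j * R n j)
    (hA : ∀ n k, R (n + 1) (k + 1) = ∑ j ∈ Finset.range (n + 1), a j * R n (k + j)) :
    (∀ n k : ℕ, 0 ≤ R n k) ∧
      ∀ n k : ℕ, 1 ≤ k → k + 1 ≤ n → R n (k - 1) * R n (k + 1) ≤ R n k ^ 2 := by
  have hpos : ∀ n k, 0 ≤ R n k := by
    intro n
    induction n with
    | zero =>
      intro k
      rcases Nat.eq_zero_or_pos k with rfl | hk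
      · rw [hR00]; norm_num
      · rw [htri 0 k hk]
    | succ n ih =>
      intro k
      cases k with
      | zero =>
        rw [hZ]
        exact Finset.sum_nonneg fun j _ => mul_nonneg (hz j) (ih j)
      | succ k =>
        rw [hA]
        exact Finset.sum_nonneg fun j _ => mul_nonneg (ha j) (ih _)
  have key : ∀ n, ∀ i j : ℕ, i < j → R n i * R n (j + 1) ≤ R n (i + 1) * R n j := by
    intro n
    induction n with
    | zero =>
      intro i j hij
      rw [htri 0 (j + 1) (by omega), mul_zero]
      exact mul_nonneg (hpos _ _) (hpos _ _)
    | succ n ih =>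
      intro i j hij
      set bb : ℤ → ℝ := fun t => if 0 ≤ t ∧ t ≤ (n : ℤ) then R n t.toNat else 0 with hbb
      have hb0 : ∀ t, 0 ≤ bb t := by
        intro t; rw [hbb]; dsimp only; split
        · exact hpos _ _
        · exact le_refl 0
      have hbsupp : ∀ t : ℤ, t < 0 ∨ (n : ℤ) < t → bb t = 0 := by
        intro t ht; rw [hbb]; dsimp only; rw [if_neg (by omega)]
      have hbtp2 : ∀ t t' : ℤ, t ≤ t' → bb t * bb (t' + 1) ≤ bb (t + 1) * bb t' := by
        intro t t' htt
        rcases eq_or_lt_of_le htt with rfl | hlt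
        · rw [mul_comm]
        · by_cases h1 : 0 ≤ t ∧ t ≤ (n : ℤ)
          · by_cases h2 : 0 ≤ t' + 1 ∧ t' + 1 ≤ (n : ℤ)
            · have e1 : bb t = R n t.toNat := by rw [hbb]; dsimp only; rw [if_pos h1]
              have e2 : bb (t' + 1) = R n (t'.toNat + 1) := by
                rw [hbb]; dsimp only; rw [if_pos h2]; congr 1 <;> omega
              have e3 : bb (t + 1) = R n (t.toNat + 1) := by
                rw [hbb]; dsimp only; rw [if_pos (by omega)]; congr 1 <;> omega
              have e4 : bb t' = R n t'.toNat := by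
                rw [hbb]; dsimp only; rw [if_pos (by omega)]
              rw [e1, e2, e3, e4]
              exact ih t.toNat t'.toNat (by omega)
            · rw [hbsupp (t' + 1) (by omega), mul_zero]
              exact mul_nonneg (hb0 _) (hb0 _)
          · rw [hbsupp t (by omega), zero_mul]
            exact mul_nonneg (hb0 _) (hb0 _)
      -- Claim 1 : rows of R at level n+1 equal the convolution sums
      have hckNat : ∀ k : ℕ,
          R (n + 1) k = ∑ m ∈ Finset.Icc (-1 : ℤ) ((n : ℤ) + 1),
            bb m * Aext a (m + 1 - (k : ℤ)) := by
        intro k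
        have step1 : ∑ m ∈ Finset.Icc (-1 : ℤ) ((n : ℤ) + 1), bb m * Aext a (m + 1 - (k : ℤ))
            = ∑ m ∈ Finset.Icc (0 : ℤ) (n : ℤ), bb m * Aext a (m + 1 - (k : ℤ)) := by
          symm
          apply Finset.sum_subset (Finset.Icc_subset_Icc (by omega) (by omega))
          intro x hx hx'
          simp only [Finset.mem_Icc] at hx hx'
          rw [hbsupp x (by omega), zero_mul]
        have step2 : ∑ m ∈ Finset.Icc (0 : ℤ) (n : ℤ), bb m * Aext a (m + 1 - (k : ℤ))
            = ∑ m ∈ Finset.range (n + 1), R n m * Aext a ((m : ℤ) + 1 - (k : ℤ)) := by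
          rw [sum_Icc_int_eq (fun m => bb m * Aext a (m + 1 - (k : ℤ))) n]
          apply Finset.sum_congr rfl
          intro m hm
          simp only [Finset.mem_range] at hm
          have : bb (m : ℤ) = R n m := by
            rw [hbb]; dsimp only; rw [if_pos (by omega)]; congr 1 <;> omega
          rw [this]
        rw [step1, step2]
        cases k with
        | zero =>
          rw [hZ]
          apply Finset.sum_congr rfl
          intro m hm
          have : Aext a ((m : ℤ) + 1 - ((0 : ℕ) : ℤ)) = a (m + 1) := by
            unfold Aext
            rw [if_pos (by push_cast; omega)]
            congr 1 <;> omega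
          rw [this, hcons m]
          ring
        | succ k' =>
          rw [hA n k']
          have sub1 : ∑ m ∈ Finset.range (n + 1), R n m * Aext a ((m : ℤ) + 1 - ((k' + 1 : ℕ) : ℤ))
              = ∑ m ∈ Finset.Ico k' (n + 1), R n m * Aext a ((m : ℤ) + 1 - ((k' + 1 : ℕ) : ℤ)) := by
            symm
            rw [Finset.range_eq_Ico]
            apply Finset.sum_subset (Finset.Ico_subset_Ico (Nat.zero_le _) le_rfl)
            intro x hx hx'
            simp only [Finset.mem_Ico] at hx hx'
            have : Aext a ((x : ℤ) + 1 - ((k' + 1 : ℕ) : ℤ)) = 0 := by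
              unfold Aext
              rw [if_neg (by push_cast; omega)]
            rw [this, mul_zero]
          have sub2 : ∑ m ∈ Finset.Ico k' (n + 1), R n m * Aext a ((m : ℤ) + 1 - ((k' + 1 : ℕ) : ℤ))
              = ∑ jj ∈ Finset.range (n + 1 - k'), a jj * R n (k' + jj) := by
            rw [Finset.sum_Ico_eq_sum_range]
            apply Finset.sum_congr rfl
            intro jj _
            have : Aext a (((k' + jj : ℕ) : ℤ) + 1 - ((k' + 1 : ℕ) : ℤ)) = a jj := by
              unfold Aext
              rw [if_pos (by push_cast; omega)]
              congr 1 <;> omega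
            rw [this]
            ring
          have sub3 : ∑ jj ∈ Finset.range (n + 1 - k'), a jj * R n (k' + jj)
              = ∑ jj ∈ Finset.range (n + 1), a jj * R n (k' + jj) := by
            apply Finset.sum_subset (Finset.range_subset_range.2 (by omega))
            intro x hx hx'
            simp only [Finset.mem_range] at hx hx'
            rw [htri n (k' + x) (by omega), mul_zero]
          rw [sub1, sub2, sub3]
      have hckZ : ∀ k : ℤ, 0 ≤ k → R (n + 1) k.toNat
          = ∑ m ∈ Finset.Icc (-1 : ℤ) ((n : ℤ) + 1), bb m * Aext a (m + 1 - k) := by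
        intro k hk
        lift k to ℕ using hk
        rw [Int.toNat_natCast]
        exact hckNat k
      have H := conv_tp2 (Aext a) (Aext_nonneg a ha) (Aext_gen a ha hlogconcave) bb hb0
        (n : ℤ) hbsupp hbtp2 (i : ℤ) (j : ℤ) (by exact_mod_cast hij)
      have e1 := hckZ (i : ℤ) (by positivity)
      have e2 := hckZ ((i : ℤ) + 1) (by positivity)
      have e3 := hckZ (j : ℤ) (by positivity)
      have e4 := hckZ ((j : ℤ) + 1) (by positivity)
      rw [Int.toNat_natCast] at e1 e3
      rw [show ((i : ℤ) + 1).toNat = i + 1 by omega] at e2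
      rw [show ((j : ℤ) + 1).toNat = j + 1 by omega] at e4
      rw [← e1, ← e2, ← e3, ← e4] at H
      exact H
  refine ⟨hpos, fun n k hk _ => ?_⟩
  have h := key n (k - 1) k (by omega)
  rw [show k - 1 + 1 = k by omega] at h
  calc R n (k - 1) * R n (k + 1) ≤ R n k * R n k := h
    _ = R n k ^ 2 := by ring
end
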